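/- If (a_n) is a nondecreasing sequence of positive integers that is complete (every positive integer is a sum of distinct terms), then a_1 = 1 and a_{n+1} ≤ 1 + a_1 + ... + a_n for all n ≥ 1. -/

import Mathlib

/-- A sequence of positive integers (indexed from 1) is complete if every positive
integer is a sum of distinct terms (each index used at most once). -/
def SeqComplete (a : ℕ → ℕ) : Prop :=
  ∀ N : ℕ, 0 < N → ∃ s : Finset ℕ, (∀ i ∈ s, 1 ≤ i) ∧ ∑ i ∈ s, a i = N

/-- `H` is the positive linear recurrence sequence (PLRS) with coefficients
`c 1, …, c L` (indexed from 1). -/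
def IsPLRS (L : ℕ) (c : ℕ → ℕ) (H : ℕ → ℕ) : Prop :=
  H 1 = 1 ∧
  (∀ n, 1 ≤ n → n < L → H (n + 1) = (∑ i ∈ Finset.Icc 1 n, c i * H (n + 1 - i)) + 1) ∧
  (∀ n, L ≤ n → H (n + 1) = ∑ i ∈ Finset.Icc 1 L, c i * H (n + 1 - i))

lemma mono_of_step (a : ℕ → ℕ) (hmono : ∀ n, 1 ≤ n → a n ≤ a (n + 1)) :
    ∀ m k, 1 ≤ m → m ≤ k → a m ≤ a k := by
  intro m k hm hmk
  induction k with
  | zero => omega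
  | succ k ih =>
    rcases Nat.eq_or_lt_of_le hmk with h | h
    · exact h ▸ le_rfl
    · exact le_trans (ih (by omega)) (hmono k (by omega))

theorem brown_necessity (a : ℕ → ℕ)
    (hpos : ∀ n, 1 ≤ n → 0 < a n)
    (hmono : ∀ n, 1 ≤ n → a n ≤ a (n + 1))
    (hcomp : SeqComplete a) :
    a 1 = 1 ∧ ∀ n, 1 ≤ n → a (n + 1) ≤ 1 + ∑ i ∈ Finset.Icc 1 n, a i := by
  have hm : ∀ m k, 1 ≤ m → m ≤ k → a m ≤ a k := mono_of_step a hmono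
  constructor
  · obtain ⟨s, hs1, hs2⟩ := hcomp 1 one_pos
    have hne : s.Nonempty := by
      by_contra h
      rw [Finset.not_nonempty_iff_eq_empty] at h
      simp [h] at hs2
    obtain ⟨j, hj⟩ := hne
    have h1 : a j ≤ 1 := hs2 ▸ Finset.single_le_sum (fun i _ => Nat.zero_le _) hj
    have h2 : a 1 ≤ a j := hm 1 j le_rfl (hs1 j hj)
    have := hpos 1 le_rfl
    omega
  · intro n hn
    by_contra hcon
    push_neg at hcon
    set N := 1 + ∑ i ∈ Finset.Icc 1 n, a i with hN
    obtain ⟨s, hs1, hs2⟩ := hcomp N (by positivity)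
    have hsub : s ⊆ Finset.Icc 1 n := by
      intro j hj
      rw [Finset.mem_Icc]
      refine ⟨hs1 j hj, ?_⟩
      by_contra h
      push_neg at h
      have h1 : a (n + 1) ≤ a j := hm (n + 1) j (by omega) h
      have h2 : a j ≤ ∑ i ∈ s, a i := Finset.single_le_sum (fun i _ => Nat.zero_le _) hj
      omega
    have : ∑ i ∈ s, a i ≤ ∑ i ∈ Finset.Icc 1 n, a i :=
      Finset.sum_le_sum_of_subset hsub
    omega
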